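/- If D is a Poisson nonlinear contravariant connection, then each D^α (α a 1-form) is a derivation of the Poisson algebra (H_Ω, {·,·}_Ω): concretely, in local coordinates, if F ∈ H_Ω with ∂F/∂ξ_i = π^{ij} a_j, and b_t ∂/∂ξ_t := [D^{dx^i}, a_t ∂/∂ξ_t], then ∂(D^{dx^i} F)/∂ξ_j = π^{jt} b_t, so D^{dx^i} F ∈ H_Ω with Hamiltonian field [D^{dx^i}, H_F]. -/

import Mathlib

/-- Partial derivative in the base (`x`) direction, `p = (x, ξ)`. -/
noncomputable def pdx {n : ℕ} (k : Fin n)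
    (f : (Fin n → ℝ) × (Fin n → ℝ) → ℝ) (p : (Fin n → ℝ) × (Fin n → ℝ)) : ℝ :=
  fderiv ℝ f p (Pi.single k 1, 0)

/-- Partial derivative in the fibre (`ξ`) direction. -/
noncomputable def pdxi {n : ℕ} (k : Fin n)
    (f : (Fin n → ℝ) × (Fin n → ℝ) → ℝ) (p : (Fin n → ℝ) × (Fin n → ℝ)) : ℝ :=
  fderiv ℝ f p (0, Pi.single k 1)

/-- Partial derivative of a function of `x` only. -/
noncomputable def pd {n : ℕ} (k : Fin n) (f : (Fin n → ℝ) → ℝ) (x : Fin n → ℝ) : ℝ :=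
  fderiv ℝ f x (Pi.single k 1)

/-- The nonlinear contravariant connection `D^{dx^i} = π^{is} ∂/∂x^s − A^i_s ∂/∂ξ_s`. -/
noncomputable def Dop {n : ℕ} (π : Fin n → Fin n → (Fin n → ℝ) → ℝ)
    (A : Fin n → Fin n → (Fin n → ℝ) × (Fin n → ℝ) → ℝ) (m : Fin n)
    (F : (Fin n → ℝ) × (Fin n → ℝ) → ℝ) (p : (Fin n → ℝ) × (Fin n → ℝ)) : ℝ :=
  ∑ s, π m s p.1 * pdx s F p - ∑ s, A m s p * pdxi s F p

section helpers
variable {E : Type*} [NormedAddCommGroup E] [NormedSpace ℝ E]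

lemma contDiff_fderiv' {F : E → ℝ} (hF : ContDiff ℝ (⊤ : ℕ∞) F) :
    ContDiff ℝ (⊤ : ℕ∞) (fderiv ℝ F) := hF.fderiv_right (by norm_cast)

lemma diff_fd_apply {F : E → ℝ} (hF : ContDiff ℝ (⊤ : ℕ∞) F) (v : E) :
    Differentiable ℝ (fun q => fderiv ℝ F q v) :=
  fun p => (((contDiff_fderiv' hF).differentiable (by norm_cast)) p).clm_apply
    (differentiableAt_const v)

lemma swap_fd {F : E → ℝ} (hF : ContDiff ℝ (⊤ : ℕ∞) F) (p : E) (v w : E) :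
    fderiv ℝ (fun q => fderiv ℝ F q v) p w = fderiv ℝ (fun q => fderiv ℝ F q w) p v := by
  have hdF : DifferentiableAt ℝ (fderiv ℝ F) p :=
    ((contDiff_fderiv' hF).differentiable (by norm_cast)) p
  rw [fderiv_clm_apply hdF (differentiableAt_const v),
      fderiv_clm_apply hdF (differentiableAt_const w)]
  have hsym : IsSymmSndFDerivAt ℝ F p := hF.contDiffAt.isSymmSndFDerivAt (by rw [minSmoothness_of_isRCLikeNormedField]; norm_cast)
  simp [hsym w v]

lemma mul_deriv {f g : E → ℝ} {p : E} (hf : DifferentiableAt ℝ f p)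
    (hg : DifferentiableAt ℝ g p) (v : E) :
    fderiv ℝ (fun q => f q * g q) p v = fderiv ℝ f p v * g p + f p * fderiv ℝ g p v := by
  rw [fderiv_fun_mul hf hg]; simp; ring

lemma sum_deriv {n : ℕ} {f : Fin n → E → ℝ} {p : E} (hf : ∀ s, DifferentiableAt ℝ (f s) p)
    (v : E) : fderiv ℝ (fun q => ∑ s, f s q) p v = ∑ s, fderiv ℝ (f s) p v := by
  rw [fderiv_fun_sum fun s _ => hf s]; simp

lemma fst_deriv {n : ℕ} {g : (Fin n → ℝ) → ℝ} (hg : Differentiable ℝ g)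
    (p v : (Fin n → ℝ) × (Fin n → ℝ)) :
    fderiv ℝ (fun q : (Fin n → ℝ) × (Fin n → ℝ) => g q.1) p v = fderiv ℝ g p.1 v.1 := by
  have h : HasFDerivAt (fun q : (Fin n → ℝ) × (Fin n → ℝ) => g q.1)
      ((fderiv ℝ g p.1).comp (ContinuousLinearMap.fst ℝ _ _)) p :=
    (hg p.1).hasFDerivAt.comp p hasFDerivAt_fst
  rw [h.fderiv]; rfl
end helpers

lemma alg_key {n : ℕ} (P B L a Q : Fin n → ℝ) (C R X Y E : Fin n → Fin n → ℝ)
    (hkey : ∀ u, ∑ s, P s * C s u - ∑ s, B s * R s u = ∑ s, Q s * E u s) :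
    ∑ s, P s * (∑ t, (C s t * a t + Q t * X s t))
      - ∑ s, (B s * (∑ t, R s t * a t) + L s * (∑ t, Q t * Y s t))
    = ∑ t, Q t * (∑ s, P s * X s t - ∑ s, L s * Y s t + ∑ k, E k t * a k) := by
  simp only [Finset.mul_sum, mul_add, mul_sub, Finset.sum_add_distrib, Finset.sum_sub_distrib]
  have h2 : ∑ s, ∑ t, P s * (Q t * X s t) = ∑ t, ∑ s, Q t * (P s * X s t) := by
    rw [Finset.sum_comm]
    exact Finset.sum_congr rfl fun t _ => Finset.sum_congr rfl fun s _ => by ring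
  have h4 : ∑ s, ∑ t, L s * (Q t * Y s t) = ∑ t, ∑ s, Q t * (L s * Y s t) := by
    rw [Finset.sum_comm]
    exact Finset.sum_congr rfl fun t _ => Finset.sum_congr rfl fun s _ => by ring
  have h5 : ∑ s, ∑ t, P s * (C s t * a t) - ∑ s, ∑ t, B s * (R s t * a t)
      = ∑ t, ∑ k, Q t * (E k t * a k) := by
    have e1 : ∑ s, ∑ t, P s * (C s t * a t) = ∑ t, (∑ s, P s * C s t) * a t := by
      rw [Finset.sum_comm]
      exact Finset.sum_congr rfl fun t _ => by
        rw [Finset.sum_mul]; exact Finset.sum_congr rfl fun s _ => by ring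
    have e2 : ∑ s, ∑ t, B s * (R s t * a t) = ∑ t, (∑ s, B s * R s t) * a t := by
      rw [Finset.sum_comm]
      exact Finset.sum_congr rfl fun t _ => by
        rw [Finset.sum_mul]; exact Finset.sum_congr rfl fun s _ => by ring
    rw [e1, e2, ← Finset.sum_sub_distrib]
    calc ∑ t, ((∑ s, P s * C s t) * a t - (∑ s, B s * R s t) * a t)
        = ∑ t, (∑ s, Q s * E t s) * a t := by
          exact Finset.sum_congr rfl fun t _ => by rw [← sub_mul, hkey t]
      _ = ∑ t, ∑ s, Q s * E t s * a t := by
          exact Finset.sum_congr rfl fun t _ => by rw [Finset.sum_mul]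
      _ = ∑ t, ∑ k, Q t * (E k t * a k) := by
          rw [Finset.sum_comm]
          exact Finset.sum_congr rfl fun t _ => Finset.sum_congr rfl fun k _ => by ring
  linarith

/-- For a Poisson nonlinear contravariant connection `D`, each `D^{dx^i}` preserves
`H_Ω`: if `∂F/∂ξ_j = π^{jt} a_t`, then, with
`b_t = π^{is} ∂a_t/∂x^s − A^i_s ∂a_t/∂ξ_s + (∂A^i_t/∂ξ_k) a_k` (the components of
`[D^{dx^i}, H_F]`), one has `∂(D^{dx^i} F)/∂ξ_j = π^{jt} b_t`; so `D^{dx^i} F ∈ H_Ω`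
with Hamiltonian field `[D^{dx^i}, H_F]`. -/
theorem poisson_connection_derivation_of_hamiltonian_space
    (n : ℕ) (π : Fin n → Fin n → (Fin n → ℝ) → ℝ)
    (A : Fin n → Fin n → (Fin n → ℝ) × (Fin n → ℝ) → ℝ)
    (hπ : ∀ i j, ContDiff ℝ (⊤ : ℕ∞) (π i j))
    (hanti : ∀ i j (x : Fin n → ℝ), π i j x = -π j i x)
    (hA : ∀ i s, ContDiff ℝ (⊤ : ℕ∞) (A i s))
    (hpois : ∀ m i j (p : (Fin n → ℝ) × (Fin n → ℝ)),
      ∑ s, π m s p.1 * pd s (π i j) p.1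
        - ∑ s, pdxi i (A m s) p * π s j p.1
        - ∑ s, pdxi j (A m s) p * π i s p.1 = 0)
    (F : (Fin n → ℝ) × (Fin n → ℝ) → ℝ) (a : Fin n → (Fin n → ℝ) × (Fin n → ℝ) → ℝ)
    (hF : ContDiff ℝ (⊤ : ℕ∞) F) (ha : ∀ t, ContDiff ℝ (⊤ : ℕ∞) (a t))
    (hFa : ∀ j p, pdxi j F p = ∑ t, π j t p.1 * a t p) (i : Fin n) :
    ∀ j (p : (Fin n → ℝ) × (Fin n → ℝ)),
      pdxi j (fun q => Dop π A i F q) p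
        = ∑ t, π j t p.1 *
            (∑ s, π i s p.1 * pdx s (a t) p - ∑ s, A i s p * pdxi s (a t) p
              + ∑ k, pdxi k (A i t) p * a k p) := by
  intro j p
  -- basic differentiability facts
  have dπ : ∀ a' b, Differentiable ℝ (fun q : (Fin n → ℝ) × (Fin n → ℝ) => π a' b q.1) :=
    fun a' b => ((hπ a' b).differentiable (by norm_cast)).comp differentiable_fst
  have dπ' : ∀ a' b, Differentiable ℝ (π a' b) := fun a' b => (hπ a' b).differentiable (by norm_cast)
  have dA' : ∀ s t, Differentiable ℝ (A s t) := fun s t => (hA s t).differentiable (by norm_cast)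
  have da' : ∀ t, Differentiable ℝ (a t) := fun t => (ha t).differentiable (by norm_cast)
  have dFv : ∀ v, Differentiable ℝ (fun q => fderiv ℝ F q v) := diff_fd_apply hF
  -- the ξ_j derivative of each mixed second derivative of F, via hFa
  have hswap : ∀ (v : (Fin n → ℝ) × (Fin n → ℝ)),
      fderiv ℝ (fun q => fderiv ℝ F q v) p (0, Pi.single j 1)
        = fderiv ℝ (fun q => ∑ t, π j t q.1 * a t q) p v := by
    intro v
    rw [swap_fd hF p v (0, Pi.single j 1)]
    have hfn : (fun q => fderiv ℝ F q (0, Pi.single j 1))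
        = fun q => ∑ t, π j t q.1 * a t q := funext fun q => hFa j q
    rw [hfn]
  have hsum_deriv : ∀ (v : (Fin n → ℝ) × (Fin n → ℝ)),
      fderiv ℝ (fun q => ∑ t, π j t q.1 * a t q) p v
        = ∑ t, (fderiv ℝ (π j t) p.1 v.1 * a t p + π j t p.1 * fderiv ℝ (a t) p v) := by
    intro v
    rw [sum_deriv (fun t => ((dπ j t) p).fun_mul ((da' t) p)) v]
    exact Finset.sum_congr rfl fun t _ => by
      rw [mul_deriv ((dπ j t) p) ((da' t) p) v, fst_deriv (dπ' j t) p v]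
  -- expand the left-hand side
  have expand : pdxi j (fun q => Dop π A i F q) p
      = ∑ s, π i s p.1 *
          (∑ t, (pd s (π j t) p.1 * a t p + π j t p.1 * pdx s (a t) p))
        - ∑ s, (pdxi j (A i s) p * (∑ t, π s t p.1 * a t p)
            + A i s p * (∑ t, π j t p.1 * pdxi s (a t) p)) := by
    simp only [pdxi, pdx, Dop]
    rw [fderiv_fun_sub
        (DifferentiableAt.fun_sum fun s _ => ((dπ i s) p).fun_mul ((dFv _) p))
        (DifferentiableAt.fun_sum fun s _ => ((dA' i s) p).fun_mul ((dFv _) p))]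
    simp only [ContinuousLinearMap.sub_apply]
    rw [sum_deriv (fun s => ((dπ i s) p).fun_mul ((dFv _) p)) _,
        sum_deriv (fun s => ((dA' i s) p).fun_mul ((dFv _) p)) _]
    congr 1
    · refine Finset.sum_congr rfl fun s _ => ?_
      rw [mul_deriv ((dπ i s) p) ((dFv _) p) _, fst_deriv (dπ' i s) p _]
      simp only [map_zero, zero_mul, zero_add]
      rw [hswap (Pi.single s 1, 0), hsum_deriv (Pi.single s 1, 0)]
      simp only [pd, pdx]
    · refine Finset.sum_congr rfl fun s _ => ?_
      rw [mul_deriv ((dA' i s) p) ((dFv _) p) _]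
      rw [hswap (0, Pi.single s 1), hsum_deriv (0, Pi.single s 1)]
      have : fderiv ℝ F p (0, Pi.single s 1) = ∑ t, π s t p.1 * a t p := hFa s p
      rw [this]
      simp only [pdxi, map_zero, zero_mul, zero_add]
  rw [expand]
  -- conclude by the algebraic identity, using the Poisson condition
  refine alg_key (fun s => π i s p.1) (fun s => pdxi j (A i s) p) (fun s => A i s p)
    (fun t => a t p) (fun t => π j t p.1) (fun s t => pd s (π j t) p.1)
    (fun s t => π s t p.1) (fun s t => pdx s (a t) p) (fun s t => pdxi s (a t) p)
    (fun k t => pdxi k (A i t) p) (fun u => ?_)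
  have h := hpois i j u p
  have hc : ∑ s, pdxi u (A i s) p * π j s p.1 = ∑ s, π j s p.1 * pdxi u (A i s) p :=
    Finset.sum_congr rfl fun s _ => mul_comm _ _
  linarith
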